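/- Let s ≥ 2 be an integer and q = 2^s. There do not exist a finite nonempty set Λ ⊆ ℂ \ {0} and a function k : Λ → ℤ with k(λ) ≠ 0 for all λ ∈ Λ, such that the function F(n) := Σ_{λ ∈ Λ} k(λ)·λ^n satisfies F(1) = q/2 and, for every integer n ≥ 2, F(n) ∈ {q^n, q^n/2, 1}. -/

import Mathlib

open Finset Polynomial

/-- An exponential sum with distinct frequencies that vanishes at every `n : ℕ`
has all coefficients equal to zero. -/
lemma expsum_vanish {ι : Type*} (t : Finset ι) (v : ι → ℂ)
    (hv : Set.InjOn v t) (c : ι → ℂ)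
    (h : ∀ n : ℕ, ∑ i ∈ t, c i * v i ^ n = 0) : ∀ i ∈ t, c i = 0 := by
  classical
  intro i0 hi0
  set P : ℂ[X] := ∏ j ∈ t.erase i0, (X - C (v j)) with hP
  have key : ∑ i ∈ t, c i * P.eval (v i) = 0 := by
    have expand : ∀ i, c i * P.eval (v i) =
        ∑ n ∈ Finset.range (P.natDegree + 1), P.coeff n * (c i * v i ^ n) := by
      intro i
      rw [Polynomial.eval_eq_sum_range, Finset.mul_sum]
      exact Finset.sum_congr rfl fun n _ => by ring
    rw [Finset.sum_congr rfl fun i _ => expand i, Finset.sum_comm]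
    simp only [← Finset.mul_sum, h, mul_zero, Finset.sum_const_zero]
  have hz : ∀ i ∈ t, i ≠ i0 → c i * P.eval (v i) = 0 := by
    intro i hi hne
    have : P.eval (v i) = 0 := by
      rw [hP, Polynomial.eval_prod]
      apply Finset.prod_eq_zero (Finset.mem_erase.mpr ⟨hne, hi⟩)
      simp
    rw [this, mul_zero]
  have hsingle : c i0 * P.eval (v i0) = 0 := by
    rw [← Finset.sum_eq_single_of_mem i0 hi0 hz]
    exact key
  have hPne : P.eval (v i0) ≠ 0 := by
    rw [hP, Polynomial.eval_prod]
    apply Finset.prod_ne_zero_iff.mpr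
    intro j hj
    have hji := Finset.mem_erase.mp hj
    have hvne : v i0 ≠ v j := fun e => hji.1 (hv hji.2 hi0 e.symm)
    simpa [sub_eq_zero] using hvne
  exact (mul_eq_zero.mp hsingle).resolve_right hPne

/-- A finitely generated commutative group has a uniform exponent for its torsion
elements. -/
lemma exists_torsion_exponent (G : Type*) [CommGroup G] [Group.FG G] :
    ∃ m : ℕ, 0 < m ∧ ∀ x : G, (∃ n : ℕ, 0 < n ∧ x ^ n = 1) → x ^ m = 1 := by
  haveI : Module.Finite ℤ (Additive G) := Module.Finite.iff_addGroup_fg.mpr inferInstance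
  set T := Submodule.torsion ℤ (Additive G) with hTdef
  haveI : Module.Finite ℤ T := Module.Finite.iff_fg.mpr (IsNoetherian.noetherian T)
  haveI : Finite T := Module.finite_of_fg_torsion T (Submodule.torsion_isTorsion ..)
  refine ⟨Nat.card T, Nat.card_pos, ?_⟩
  rintro x ⟨n, hn, hxn⟩
  have hmem : Additive.ofMul x ∈ T := by
    refine ⟨⟨(n : ℤ), mem_nonZeroDivisors_of_ne_zero (by exact_mod_cast hn.ne')⟩, ?_⟩
    show (n : ℤ) • Additive.ofMul x = 0
    rw [← ofMul_zpow, zpow_natCast, hxn]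
    simp
  have hcard : (Nat.card T) • (⟨Additive.ofMul x, hmem⟩ : T) = 0 :=
    card_nsmul_eq_zero'
  have hcard' : (Nat.card T) • (Additive.ofMul x) = 0 := by
    have := congrArg (Subtype.val) hcard
    simpa using this
  have : Additive.ofMul (x ^ Nat.card T) = 0 := by
    rw [ofMul_pow, hcard']
  simpa using congrArg Additive.toMul this

/-- A finitely generated torsion-free commutative group has `UniqueProds`. -/
lemma uniqueProds_of_fg_torsionfree (G : Type*) [CommGroup G] [Group.FG G]
    (h : ∀ x : G, (∃ n : ℕ, 0 < n ∧ x ^ n = 1) → x = 1) : UniqueProds G := by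
  haveI : Module.Finite ℤ (Additive G) := Module.Finite.iff_addGroup_fg.mpr inferInstance
  haveI : NoZeroSMulDivisors ℤ (Additive G) := by
    refine ⟨fun {z x} hzx => ?_⟩
    by_cases hz : z = 0
    · exact Or.inl hz
    · right
      have hx : Additive.toMul x ^ z = 1 := by
        have := congrArg Additive.toMul hzx
        rwa [toMul_zsmul] at this
      have hx' : Additive.toMul x ^ z.natAbs = 1 := by
        rcases Int.natAbs_eq z with he | he
        · rw [← zpow_natCast, ← he, hx]
        · rw [← zpow_natCast, ← neg_neg ((z.natAbs : ℤ)), ← he, zpow_neg, hx, inv_one]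
      have := h (Additive.toMul x) ⟨z.natAbs, Int.natAbs_pos.mpr hz, hx'⟩
      exact toMul_eq_one.mp this
  haveI : Module.Free ℤ (Additive G) := Module.free_of_finite_type_torsion_free'
  let b := Module.Free.chooseBasis ℤ (Additive G)
  let f0 : Additive G →+ (Module.Free.ChooseBasisIndex ℤ (Additive G) →₀ ℚ) :=
    (Finsupp.mapRange.addMonoidHom (Int.castAddHom ℚ)).comp
      b.repr.toLinearMap.toAddMonoidHom
  have hf0 : Function.Injective f0 := by
    apply Function.Injective.comp (g := (Finsupp.mapRange.addMonoidHom (Int.castAddHom ℚ)))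
    · exact Finsupp.mapRange_injective _ (by simp) Int.cast_injective
    · exact b.repr.injective
  let g := AddMonoidHom.toMultiplicativeRight f0
  have hg : Function.Injective g := by
    intro a b hab
    apply Additive.ofMul.injective
    apply hf0
    simpa [g, AddMonoidHom.coe_toMultiplicativeRight] using hab
  exact UniqueProds.of_injective_mulHom g.toMulHom hg inferInstance

/-- For `q = 2^s` with `s ≥ 2`, no finite exponential sum `F(n) = Σ_{λ ∈ Λ} k(λ)·λ^n`
with nonzero complex frequencies `λ` and nonzero integer coefficients `k(λ)` can satisfy
`F(1) = q/2` and `F(n) ∈ {q^n, q^n/2, 1}` for all `n ≥ 2`. -/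
theorem no_exponential_sum_interpolating_dimensions (s : ℕ) (hs : 2 ≤ s) :
    ¬ ∃ (Λ : Finset ℂ) (k : ℂ → ℤ),
        Λ.Nonempty ∧ (0 : ℂ) ∉ Λ ∧ (∀ l ∈ Λ, k l ≠ 0) ∧
        (∑ l ∈ Λ, (k l : ℂ) * l ^ (1 : ℕ) = (2 : ℂ) ^ s / 2) ∧
        (∀ n : ℕ, 2 ≤ n →
          (∑ l ∈ Λ, (k l : ℂ) * l ^ n = ((2 : ℂ) ^ s) ^ n ∨
           ∑ l ∈ Λ, (k l : ℂ) * l ^ n = ((2 : ℂ) ^ s) ^ n / 2 ∨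
           ∑ l ∈ Λ, (k l : ℂ) * l ^ n = 1)) := by
  classical
  rintro ⟨Λ, k, hne, h0, hk, h1, hvals⟩
  set q : ℂ := (2 : ℂ) ^ s with hqdef
  have hq0 : q ≠ 0 := pow_ne_zero _ two_ne_zero
  have hl0 : ∀ l ∈ Λ, l ≠ 0 := fun l hl e => h0 (e ▸ hl)
  -- units
  let uΛ : {x // x ∈ Λ} → ℂˣ := fun l => Units.mk0 l.1 (hl0 l.1 l.2)
  let uq : ℂˣ := Units.mk0 q hq0
  -- the subgroup generated by the frequencies and q
  let S : Finset ℂˣ := insert uq (Λ.attach.image uΛ)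
  let A : Subgroup ℂˣ := Subgroup.closure (S : Set ℂˣ)
  haveI hAfg : Group.FG A := Group.closure_finset_fg S
  obtain ⟨m, hm, hmt⟩ := exists_torsion_exponent A
  -- the torsion-free group of m-th powers
  let f : A →* ℂˣ := (powMonoidHom m).comp A.subtype
  let B : Subgroup ℂˣ := f.range
  haveI : Group.FG B := inferInstance
  have htf : ∀ x : B, (∃ n : ℕ, 0 < n ∧ x ^ n = 1) → x = 1 := by
    rintro ⟨x, hx⟩ ⟨n, hn, hxn⟩
    obtain ⟨a, rfl⟩ := hx
    have hxn' : (f a) ^ n = 1 := by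
      have := congrArg Subtype.val hxn
      simpa using this
    have ha : ((a : ℂˣ)) ^ (m * n) = 1 := by
      have : ((a : ℂˣ) ^ m) ^ n = 1 := hxn'
      rwa [← pow_mul] at this
    have haA : a ^ (m * n) = 1 := by
      apply Subtype.ext
      simpa using ha
    have ham : a ^ m = 1 := hmt a ⟨m * n, Nat.mul_pos hm hn, haA⟩
    apply Subtype.ext
    show f a = 1
    have : (a : ℂˣ) ^ m = 1 := by
      have := congrArg Subtype.val ham
      simpa using this
    simpa [f, powMonoidHom] using this
  haveI hup : UniqueProds B := uniqueProds_of_fg_torsionfree B htf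
  haveI : NoZeroDivisors (MonoidAlgebra ℂ B) := inferInstance
  -- evaluation homomorphisms
  let χ : ℕ → (B →* ℂ) := fun n => (powMonoidHom n).comp ((Units.coeHom ℂ).comp B.subtype)
  let ev : ℕ → (MonoidAlgebra ℂ B →ₐ[ℂ] ℂ) := fun n => MonoidAlgebra.lift ℂ ℂ B (χ n)
  have hevsingle : ∀ (j : ℕ) (b : B) (r : ℂ),
      ev j (MonoidAlgebra.single b r) = r * ((b : ℂˣ) : ℂ) ^ j := by
    intro j b r
    rw [MonoidAlgebra.lift_single]
    simp [χ, powMonoidHom, smul_eq_mul]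
  have hinj : ∀ x : MonoidAlgebra ℂ B, (∀ j : ℕ, ev j x = 0) → x = 0 := by
    intro x hx
    have hcoeff : ∀ b ∈ x.coeff.support, x.coeff b = 0 := by
      apply expsum_vanish x.coeff.support (fun b : B => ((b : ℂˣ) : ℂ))
      · intro b1 _ b2 _ he
        exact Subtype.ext (Units.ext he)
      · intro n
        have := hx n
        rw [MonoidAlgebra.lift_apply] at this
        simpa [Finsupp.sum, χ, powMonoidHom, smul_eq_mul] using this
    ext b
    by_cases hb : b ∈ x.coeff.support
    · exact hcoeff b hb
    · exact Finsupp.notMem_support_iff.mp hb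
  -- the elements of B corresponding to the frequencies
  have hmemΛ : ∀ l : {x // x ∈ Λ}, uΛ l ∈ A := by
    intro l
    apply Subgroup.subset_closure
    simp only [S, Finset.coe_insert, Set.mem_insert_iff, Finset.coe_image]
    right
    exact ⟨l, by simp⟩
  have hmemq : uq ∈ A := by
    apply Subgroup.subset_closure
    simp [S]
  let aΛ : {x // x ∈ Λ} → A := fun l => ⟨uΛ l, hmemΛ l⟩
  let aq : A := ⟨uq, hmemq⟩
  let bΛ : {x // x ∈ Λ} → B := fun l => f.rangeRestrict (aΛ l)
  let bq : B := f.rangeRestrict aq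
  have hbl : ∀ l : {x // x ∈ Λ}, ((bΛ l : ℂˣ) : ℂ) = l.1 ^ m := by
    intro l
    show ((f (aΛ l) : ℂˣ) : ℂ) = l.1 ^ m
    simp [f, powMonoidHom, aΛ, uΛ, Units.val_pow_eq_pow_val]
  have hbq : ((bq : ℂˣ) : ℂ) = q ^ m := by
    show ((f aq : ℂˣ) : ℂ) = q ^ m
    simp [f, powMonoidHom, aq, uq, Units.val_pow_eq_pow_val]
  -- the three elements
  let F : ℕ → ℂ := fun n => ∑ l ∈ Λ, (k l : ℂ) * l ^ n
  let Y : MonoidAlgebra ℂ B :=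
    ∑ l ∈ Λ.attach, MonoidAlgebra.single (bΛ l) (2 * (k l.1 : ℂ) * l.1)
  have hevY : ∀ j : ℕ, ev j Y = 2 * F (1 + m * j) := by
    intro j
    rw [map_sum]
    have : ∀ l ∈ Λ.attach,
        ev j (MonoidAlgebra.single (bΛ l) (2 * (k l.1 : ℂ) * l.1))
          = 2 * ((k l.1 : ℂ) * l.1 ^ (1 + m * j)) := by
      intro l _
      rw [hevsingle, hbl, ← pow_mul, pow_add, pow_one]
      ring
    rw [Finset.sum_congr rfl this, ← Finset.mul_sum]
    congr 1
    exact Finset.sum_attach Λ (fun x => (k x : ℂ) * x ^ (1 + m * j))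
  let X1 : MonoidAlgebra ℂ B := Y - MonoidAlgebra.single bq q
  let X2 : MonoidAlgebra ℂ B := Y - MonoidAlgebra.single bq (2 * q)
  let X3 : MonoidAlgebra ℂ B := Y - MonoidAlgebra.single 1 2
  have hq1 : ∀ j : ℕ, q * (q ^ m) ^ j = q ^ (1 + m * j) := by
    intro j
    rw [← pow_mul, pow_add, pow_one]
  have hevX1 : ∀ j : ℕ, ev j X1 = 2 * F (1 + m * j) - q ^ (1 + m * j) := by
    intro j
    rw [map_sub, hevY, hevsingle, hbq, hq1]
  have hevX2 : ∀ j : ℕ, ev j X2 = 2 * F (1 + m * j) - 2 * q ^ (1 + m * j) := by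
    intro j
    rw [map_sub, hevY, hevsingle, hbq]
    rw [mul_assoc, hq1]
  have hevX3 : ∀ j : ℕ, ev j X3 = 2 * F (1 + m * j) - 2 := by
    intro j
    rw [map_sub, hevY, hevsingle]
    norm_num
  have hF1 : F 1 = q / 2 := h1
  -- the product vanishes identically
  have hprod : X1 * X2 * X3 = 0 := by
    apply hinj
    intro j
    rw [map_mul, map_mul, hevX1, hevX2, hevX3]
    rcases Nat.eq_zero_or_pos j with hj | hj
    · subst hj
      have : 2 * F (1 + m * 0) - q ^ (1 + m * 0) = 0 := by
        simp only [Nat.mul_zero, Nat.add_zero, pow_one, hF1]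
        field_simp
        ring
      rw [this, zero_mul, zero_mul]
    · have hn2 : 2 ≤ 1 + m * j := by
        have := Nat.mul_le_mul hm hj
        omega
      rcases hvals (1 + m * j) hn2 with hcase | hcase | hcase
      · have : 2 * F (1 + m * j) - 2 * q ^ (1 + m * j) = 0 := by
          show 2 * F (1 + m * j) - 2 * q ^ (1 + m * j) = 0
          rw [show F (1 + m * j) = q ^ (1 + m * j) from hcase]
          ring
        rw [this, mul_zero, zero_mul]
      · have : 2 * F (1 + m * j) - q ^ (1 + m * j) = 0 := by
          rw [show F (1 + m * j) = q ^ (1 + m * j) / 2 from hcase]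
          field_simp
          ring
        rw [this, zero_mul, zero_mul]
      · have : 2 * F (1 + m * j) - 2 = 0 := by
          rw [show F (1 + m * j) = 1 from hcase]
          ring
        rw [this, mul_zero]
  -- split into cases
  have hF1' : 2 * F 1 = q := by
    rw [hF1]
    field_simp
  rcases mul_eq_zero.mp hprod with h12 | h3
  · rcases mul_eq_zero.mp h12 with hX1z | hX2z
    · -- main case : the coefficient of q^m gives a contradiction with integrality
      have hYeq : Y = MonoidAlgebra.single bq q := by
        have := hX1z
        rwa [sub_eq_zero] at this
      have happ := congrArg (fun z : MonoidAlgebra ℂ B => z.coeff bq) hYeq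
      have hYapp : Y.coeff bq = ∑ l ∈ Λ.attach,
          (if bΛ l = bq then 2 * (k l.1 : ℂ) * l.1 else 0) := by
        rw [show Y.coeff bq = (∑ l ∈ Λ.attach,
            MonoidAlgebra.single (bΛ l) (2 * (k l.1 : ℂ) * l.1)).coeff bq from rfl]
        rw [MonoidAlgebra.coeff_sum, Finset.sum_apply']
        exact Finset.sum_congr rfl fun l _ => by rw [MonoidAlgebra.coeff_single, Finsupp.single_apply]
      have hsapp : (MonoidAlgebra.single bq q : MonoidAlgebra ℂ B).coeff bq = q := by
        rw [MonoidAlgebra.coeff_single, Finsupp.single_eq_same]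
      have hcond : ∀ l : {x // x ∈ Λ}, (bΛ l = bq) ↔ l.1 ^ m = q ^ m := by
        intro l
        constructor
        · intro he
          rw [← hbl l, ← hbq, he]
        · intro he
          apply Subtype.ext
          apply Units.ext
          rw [hbl l, hbq]
          exact he
      have hsum : ∑ l ∈ Λ.attach.filter (fun l => l.1 ^ m = q ^ m),
          (2 * (k l.1 : ℂ) * l.1) = q := by
        rw [Finset.sum_filter]
        have hstep : ∑ l ∈ Λ.attach,
            (if bΛ l = bq then 2 * (k l.1 : ℂ) * l.1 else 0) = q := by
          rw [← hYapp, happ, hsapp]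
        refine Eq.trans ?_ hstep
        exact Finset.sum_congr rfl fun l _ => if_congr (hcond l).symm rfl rfl
      -- now divide by 2q
      set T : Finset {x // x ∈ Λ} := Λ.attach.filter (fun l => l.1 ^ m = q ^ m) with hTdef
      have hkey : ∑ l ∈ T, (k l.1 : ℂ) * (l.1 / q) = 1 / 2 := by
        have : ∑ l ∈ T, (k l.1 : ℂ) * (l.1 / q)
            = (∑ l ∈ T, 2 * (k l.1 : ℂ) * l.1) / (2 * q) := by
          rw [Finset.sum_div]
          apply Finset.sum_congr rfl
          intro l _
          field_simp
        rw [this, hsum]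
        field_simp
      have hint : IsIntegral ℤ ((1 : ℂ) / 2) := by
        rw [← hkey]
        have hmem : (∑ l ∈ T, (k l.1 : ℂ) * (l.1 / q)) ∈ integralClosure ℤ ℂ := by
          apply Subalgebra.sum_mem
          intro l hl
          have hζ : IsIntegral ℤ ((l.1 : ℂ) / q) := by
            refine ⟨X ^ m - C 1, Polynomial.monic_X_pow_sub_C (1 : ℤ) hm.ne', ?_⟩
            have hlm : l.1 ^ m = q ^ m := (Finset.mem_filter.mp hl).2
            simp only [eval₂_sub, eval₂_X_pow, eval₂_C]
            rw [div_pow, hlm, div_self (pow_ne_zero m hq0)]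
            norm_num
          have hkl : ((k l.1 : ℂ)) ∈ integralClosure ℤ ℂ := by
            have : ((k l.1 : ℂ)) = algebraMap ℤ ℂ (k l.1) := by simp
            rw [this]
            exact Subalgebra.algebraMap_mem _ _
          exact mul_mem hkl hζ
        exact hmem
      -- 1/2 is not an algebraic integer
      have hQ : IsIntegral ℤ ((1 : ℚ) / 2) := by
        have he : algebraMap ℚ ℂ ((1 : ℚ) / 2) = (1 : ℂ) / 2 := by
          push_cast
          norm_num
        rw [← he] at hint
        exact (isIntegral_algebraMap_iff ((algebraMap ℚ ℂ).injective)).mp hint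
      obtain ⟨y, hy⟩ := IsIntegrallyClosed.isIntegral_iff.mp hQ
      have : ((2 * y : ℤ) : ℚ) = 1 := by
        push_cast
        rw [show ((y : ℚ)) = 1 / 2 from hy]
        ring
      have : (2 * y : ℤ) = 1 := by exact_mod_cast this
      omega
    · -- X2 = 0 : gives q = 0
      have h2 : 2 * F (1 + m * 0) - 2 * q ^ (1 + m * 0) = 0 := by
        rw [← hevX2, hX2z, map_zero]
      simp only [mul_zero, add_zero] at h2
      exact hq0 (by linear_combination hF1' - h2)
  · -- X3 = 0 : gives q = 2
    have h2 : 2 * F (1 + m * 0) - 2 = 0 := by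
      rw [← hevX3, h3, map_zero]
    simp only [mul_zero, add_zero] at h2
    have hq2 : q = 2 := by linear_combination h2 - hF1'
    have : ((2 ^ s : ℕ) : ℂ) = ((2 : ℕ) : ℂ) := by
      push_cast
      rw [← hqdef, hq2]
    have h2s : (2 ^ s : ℕ) = 2 := Nat.cast_injective this
    have : 2 ^ 2 ≤ 2 ^ s := Nat.pow_le_pow_right (by norm_num) hs
    omega
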